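/- Let c ∈ [0,1), a > 0, f : ℝ → ℝ continuous with 0 ≤ f(t) ≤ a|t| for all t, and let l = max{a/(a+c), a/(a+1−c)}. If a² < (1+c)/(2l), then every solution of x_{n+1} = c·x_n + f(x_n − x_{n−1}) converges to 0. -/

import Mathlib

open Filter

private lemma sed_step (c a l Y F Vv : ℝ) (hc0 : 0 ≤ c) (hc1 : c < 1)
    (hl_pos : 0 < l) (hl_le1 : l ≤ 1)
    (hacl : a * (1 - l) ≤ c * l) (hacl2 : a * (1 - l) ≤ l * (1 - c))
    (hFa : F ≤ a * |Y|) (hV0 : 0 ≤ Vv) (hY : Y ≤ l * Vv) :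
    c * Y + F - Vv ≤ l * F := by
  rcases le_or_gt Y 0 with hY0 | hY0
  · rw [abs_of_nonpos hY0] at hFa
    nlinarith [mul_le_mul_of_nonneg_left hFa (show (0:ℝ) ≤ 1 - l by linarith),
      mul_le_mul_of_nonneg_right hacl (neg_nonneg.mpr hY0),
      mul_le_mul_of_nonneg_right (mul_le_of_le_one_right hc0 hl_le1) (neg_nonneg.mpr hY0)]
  · rw [abs_of_pos hY0] at hFa
    have hkey : c * l + (1 - c) * l ^ 2 ≤ 1 := by
      nlinarith [mul_nonneg (show (0:ℝ) ≤ 1 - l by linarith)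
        (show (0:ℝ) ≤ 1 + (1 - c) * l by nlinarith)]
    nlinarith [mul_le_mul_of_nonneg_left hY hc0,
      mul_le_mul_of_nonneg_left hFa (show (0:ℝ) ≤ 1 - l by linarith),
      mul_le_mul_of_nonneg_right hacl2 hY0.le,
      mul_le_mul_of_nonneg_left hY (mul_nonneg hl_pos.le (show (0:ℝ) ≤ 1 - c by linarith)),
      mul_le_mul_of_nonneg_right hkey hV0]

private lemma sed_cone (A B C D l u v : ℝ) (hA : 0 < A) (hC : C ≤ 0) (hl : l ≤ 1)
    (hv : 0 ≤ v) (hu : u ≤ (l - 1) * v)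
    (hDrel : D = A * (l - 1) ^ 2 + C * (l - 1) + B) :
    D * v ^ 2 ≤ A * u ^ 2 + C * (u * v) + B * v ^ 2 ∧
      A * u ^ 2 + B * v ^ 2 ≤ A * u ^ 2 + C * (u * v) + B * v ^ 2 := by
  have hlv : (l - 1) * v ≤ 0 := mul_nonpos_of_nonpos_of_nonneg (by linarith) hv
  have hu0 : u ≤ 0 := le_trans hu hlv
  constructor
  · have h1 : u + (l - 1) * v ≤ 0 := by linarith
    have h2 : A * (u + (l - 1) * v) + C * v ≤ 0 := by
      have := mul_nonpos_of_nonneg_of_nonpos hA.le h1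
      have := mul_nonpos_of_nonpos_of_nonneg hC hv
      linarith
    have h3 : 0 ≤ ((l - 1) * v - u) * (-(A * (u + (l - 1) * v) + C * v)) :=
      mul_nonneg (by linarith) (by linarith)
    rw [hDrel]; nlinarith [h3]
  · nlinarith [mul_nonneg (neg_nonneg.mpr hC) (mul_nonneg (neg_nonneg.mpr hu0) hv)]

private lemma sed_conv (V u v : ℕ → ℝ) (A B D : ℝ) (hA : 0 < A) (hD : 0 < D) (N : ℕ)
    (hV0 : ∀ n, 0 ≤ V n)
    (h1 : ∀ n, N ≤ n → D * (v n) ^ 2 ≤ V n - V (n + 1))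
    (h2 : ∀ n, N ≤ n → A * (u n) ^ 2 + B * (v n) ^ 2 ≤ V n - V (n + 1)) :
    Tendsto u atTop (nhds 0) := by
  set W : ℕ → ℝ := fun k => V (N + k) with hW
  have hWd : ∀ k, N ≤ N + k := fun k => Nat.le_add_right _ _
  have hWanti : Antitone W := by
    apply antitone_nat_of_succ_le
    intro k
    have := h1 (N + k) (hWd k)
    have hnn : 0 ≤ D * (v (N + k)) ^ 2 := by positivity
    show V (N + (k + 1)) ≤ V (N + k)
    have e : N + (k + 1) = N + k + 1 := by omega
    rw [e]; linarith
  have hWbdd : BddBelow (Set.range W) := ⟨0, by rintro _ ⟨k, rfl⟩; exact hV0 _⟩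
  have hWlim : Tendsto W atTop (nhds (⨅ k, W k)) := tendsto_atTop_ciInf hWanti hWbdd
  have hWlim' : Tendsto (fun k => W (k + 1)) atTop (nhds (⨅ k, W k)) :=
    (tendsto_add_atTop_iff_nat 1).mpr hWlim
  have hdiff0 : Tendsto (fun k => W k - W (k + 1)) atTop (nhds 0) := by
    have := hWlim.sub hWlim'
    simpa using this
  have hv2 : Tendsto (fun k => (v (N + k)) ^ 2) atTop (nhds 0) := by
    apply tendsto_of_tendsto_of_tendsto_of_le_of_le (g := fun _ => (0:ℝ))
      (h := fun k => (W k - W (k + 1)) / D) tendsto_const_nhds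
    · simpa using hdiff0.div_const D
    · intro k; positivity
    · intro k
      show (v (N + k)) ^ 2 ≤ (W k - W (k + 1)) / D
      rw [le_div_iff₀ hD]
      have := h1 (N + k) (hWd k)
      have hWk : W k - W (k + 1) = V (N + k) - V (N + k + 1) := by
        show V (N + k) - V (N + (k + 1)) = _
        have e : N + (k + 1) = N + k + 1 := by omega
        rw [e]
      rw [hWk]; linarith
  have hu2 : Tendsto (fun k => (u (N + k)) ^ 2) atTop (nhds 0) := by
    apply tendsto_of_tendsto_of_tendsto_of_le_of_le (g := fun _ => (0:ℝ))
      (h := fun k => ((W k - W (k + 1)) - B * (v (N + k)) ^ 2) / A) tendsto_const_nhds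
    · have := (hdiff0.sub (hv2.const_mul B)).div_const A
      simpa using this
    · intro k; positivity
    · intro k
      show (u (N + k)) ^ 2 ≤ ((W k - W (k + 1)) - B * (v (N + k)) ^ 2) / A
      rw [le_div_iff₀ hA]
      have := h2 (N + k) (hWd k)
      have hWk : W k - W (k + 1) = V (N + k) - V (N + k + 1) := by
        show V (N + k) - V (N + (k + 1)) = _
        have e : N + (k + 1) = N + k + 1 := by omega
        rw [e]
      rw [hWk]; linarith
  have habs : Tendsto (fun k => |u (N + k)|) atTop (nhds 0) := by
    have h' : Tendsto (fun k => Real.sqrt ((u (N + k)) ^ 2)) atTop (nhds 0) := by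
      have := (Real.continuous_sqrt.tendsto 0).comp hu2
      simpa [Function.comp_def] using this
    have he : (fun k => Real.sqrt ((u (N + k)) ^ 2)) = fun k => |u (N + k)| :=
      funext fun k => Real.sqrt_sq_eq_abs _
    rwa [he] at h'
  have huN : Tendsto (fun k => u (N + k)) atTop (nhds 0) := by
    apply tendsto_of_tendsto_of_tendsto_of_le_of_le (g := fun k => -|u (N + k)|)
      (h := fun k => |u (N + k)|) (by simpa using habs.neg) habs
    · intro k; exact neg_abs_le _
    · intro k; exact le_abs_self _
  have heq : (fun k => u (k + N)) = fun k => u (N + k) := by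
    funext k; rw [Nat.add_comm]
  have : Tendsto (fun k => u (k + N)) atTop (nhds 0) := by
    rw [heq]; exact huN
  exact (tendsto_add_atTop_iff_nat N).mp this

private lemma sed_ratio (c a : ℝ) (x : ℕ → ℝ) (m : ℕ)
    (hc1 : c < 1) (hacle2 : a + c ≤ 2)
    (hquad : ∀ n : ℕ, 2 ≤ n → x (n + 1) ≤ (a + c) * x n - a * x (n - 1))
    (hstep : ∀ n : ℕ, m ≤ n → x n < x (n + 1)) (hm1 : 1 ≤ m) (hxm : 0 < x m) : False := by
  have hpos : ∀ n : ℕ, m ≤ n → 0 < x n := by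
    intro n hn
    obtain ⟨k, rfl⟩ : ∃ k, n = m + k := ⟨n - m, by omega⟩
    clear hn
    induction k with
    | zero => exact hxm
    | succ k ih =>
        have := hstep (m + k) (Nat.le_add_right _ _)
        calc (0:ℝ) < x (m + k) := ih
          _ < x (m + k + 1) := this
          _ = x (m + (k + 1)) := by ring_nf
  set r : ℕ → ℝ := fun n => x (n + 1) / x n with hr
  have hr1 : ∀ n, m ≤ n → 1 < r n := by
    intro n hn
    exact (one_lt_div (hpos n hn)).mpr (hstep n hn)
  have hrdec : ∀ n, m ≤ n → r (n + 1) ≤ r n - (1 - c) / r n := by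
    intro n hn
    have hp : 0 < x n := hpos n hn
    have hq : 0 < x (n + 1) := hpos (n + 1) (by omega)
    have hq2 : x n < x (n + 1) := hstep n hn
    have hkey : x (n + 2) * x n ≤ x (n + 1) ^ 2 - (1 - c) * x n ^ 2 := by
      have h1 := hquad (n + 1) (by omega)
      rw [show n + 1 - 1 = n from rfl] at h1
      nlinarith [mul_le_mul_of_nonneg_right h1 hp.le,
        mul_nonneg (show (0:ℝ) ≤ x (n+1) - x n by linarith)
          (show (0:ℝ) ≤ x (n+1) - (a + c - 1) * x n by nlinarith)]
    have hRid : r n - (1 - c) / r n = (x (n+1) ^ 2 - (1 - c) * x n ^ 2) / (x n * x (n+1)) := by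
      rw [hr]; field_simp
    rw [hRid, hr]
    rw [div_le_div_iff₀ hq (mul_pos hp hq)]
    calc x (n + 1 + 1) * (x n * x (n+1)) = (x (n + 2) * x n) * x (n + 1) := by ring
      _ ≤ (x (n + 1) ^ 2 - (1 - c) * x n ^ 2) * x (n + 1) :=
          mul_le_mul_of_nonneg_right hkey hq.le
  set δ : ℝ := (1 - c) / r m with hδ
  have hrm : 1 < r m := hr1 m le_rfl
  have hδpos : 0 < δ := div_pos (by linarith) (by linarith)
  have hchain : ∀ k : ℕ, r (m + k) ≤ r m - k * δ := by
    intro k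
    induction k with
    | zero => simp
    | succ k ih =>
        have h1 : 1 < r (m + k) := hr1 _ (Nat.le_add_right _ _)
        have h2 : r (m + k) ≤ r m := by
          have : (0:ℝ) ≤ k * δ := by positivity
          linarith
        have h3 : δ ≤ (1 - c) / r (m + k) := by
          rw [hδ]
          apply div_le_div_of_nonneg_left (by linarith) (by linarith) h2
        have h4 := hrdec (m + k) (Nat.le_add_right _ _)
        have e : r (m + (k + 1)) = r (m + k + 1) := by ring_nf
        rw [e]
        push_cast
        calc r (m + k + 1) ≤ r (m + k) - (1 - c) / r (m + k) := h4
          _ ≤ (r m - k * δ) - δ := by linarith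
          _ = r m - (k + 1 : ℝ) * δ := by ring
  obtain ⟨k, hk⟩ := exists_nat_gt ((r m - 1) / δ)
  have hk2 : r m - 1 < k * δ := by
    rw [div_lt_iff₀ hδpos] at hk; linarith
  have := hr1 (m + k) (Nat.le_add_right _ _)
  have := hchain k
  linarith

private lemma sed_bdd (c a : ℝ) (f : ℝ → ℝ) (hf : Continuous f) (hc1 : c < 1)
    (hfb : ∀ t : ℝ, 0 ≤ f t ∧ f t ≤ a * |t|)
    (x : ℕ → ℝ)
    (hx : ∀ n : ℕ, 1 ≤ n → x (n + 1) = c * x n + f (x n - x (n - 1)))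
    (hinc : ∀ n : ℕ, 1 ≤ n → x n < x (n + 1))
    (hneg : ∀ n : ℕ, 1 ≤ n → x n ≤ 0) :
    Tendsto x atTop (nhds 0) := by
  have hf0 : f 0 = 0 := le_antisymm (by simpa using (hfb 0).2) (hfb 0).1
  set z : ℕ → ℝ := fun k => x (k + 1) with hz
  have hzmono : Monotone z := by
    apply monotone_nat_of_le_succ
    intro k
    exact (hinc (k + 1) (by omega)).le
  have hbdd : BddAbove (Set.range z) := by
    refine ⟨0, ?_⟩
    rintro _ ⟨k, rfl⟩
    exact hneg (k + 1) (by omega)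
  set L : ℝ := ⨆ k, z k with hL
  have hzL : Tendsto z atTop (nhds L) := tendsto_atTop_ciSup hzmono hbdd
  have hxL : Tendsto x atTop (nhds L) := (tendsto_add_atTop_iff_nat 1).mp hzL
  have hdiff : Tendsto (fun n => x (n + 1) - x n) atTop (nhds 0) := by
    have := hzL.sub hxL
    simpa using this
  have hfy : Tendsto (fun n => f (x (n + 1) - x n)) atTop (nhds 0) := by
    have := (hf.tendsto 0).comp hdiff
    simpa [hf0, Function.comp_def] using this
  have hx2 : Tendsto (fun n => x (n + 2)) atTop (nhds L) :=
    (tendsto_add_atTop_iff_nat 2).mpr hxL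
  have heq : (fun n => x (n + 2)) = fun n => c * x (n + 1) + f (x (n + 1) - x n) := by
    funext n
    have := hx (n + 1) (by omega)
    simpa using this
  have hrhs : Tendsto (fun n => c * x (n + 1) + f (x (n + 1) - x n)) atTop (nhds (c * L + 0)) :=
    (hzL.const_mul c).add hfy
  rw [← heq] at hrhs
  have hLc : L = c * L + 0 := tendsto_nhds_unique hx2 hrhs
  have hL0 : L = 0 := by
    rcases eq_or_ne L 0 with h | h
    · exact h
    · nlinarith [hLc]
  rw [hL0] at hxL
  exact hxL

set_option maxHeartbeats 2000000 in
theorem stmt9 (c a : ℝ) (hc0 : 0 ≤ c) (hc1 : c < 1) (ha0 : 0 < a)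
    (f : ℝ → ℝ) (hf : Continuous f)
    (hfb : ∀ t : ℝ, 0 ≤ f t ∧ f t ≤ a * |t|)
    (ha : a ^ 2 < (1 + c) / (2 * max (a / (a + c)) (a / (a + 1 - c))))
    (x : ℕ → ℝ)
    (hx : ∀ n : ℕ, 1 ≤ n → x (n + 1) = c * x n + f (x n - x (n - 1))) :
    Filter.Tendsto x Filter.atTop (nhds 0) := by
  set l := max (a / (a + c)) (a / (a + 1 - c)) with hl_def
  have hac : (0:ℝ) < a + c := by linarith
  have h1c : (0:ℝ) < a + 1 - c := by linarith
  have hl_pos : 0 < l := lt_max_of_lt_left (div_pos ha0 hac)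
  have hl_le1 : l ≤ 1 :=
    max_le ((div_le_one hac).mpr (by linarith)) ((div_le_one h1c).mpr (by linarith))
  have hla : a ≤ l * (a + c) := by
    have h := le_max_left (a / (a + c)) (a / (a + 1 - c))
    rw [div_le_iff₀ hac] at h; linarith
  have hlb : a ≤ l * (a + 1 - c) := by
    have h := le_max_right (a / (a + c)) (a / (a + 1 - c))
    rw [div_le_iff₀ h1c] at h; linarith
  have hK : 2 * a ^ 2 * l < 1 + c := by
    rw [lt_div_iff₀ (by positivity)] at ha; linarith
  have ha2 : (0:ℝ) < a ^ 2 := by positivity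
  have hacl : a * (1 - l) ≤ c * l := by nlinarith
  have hacl2 : a * (1 - l) ≤ l * (1 - c) := by nlinarith
  have hacle2 : a + c ≤ 2 := by
    by_contra hcon
    push_neg at hcon
    have ha1 : 1 < a := by linarith
    have h2a3 : 2 * a ^ 3 < (1 + c) * (a + 1 - c) := by
      have h1 : 2 * a ^ 2 * a ≤ 2 * a ^ 2 * (l * (a + 1 - c)) :=
        mul_le_mul_of_nonneg_left hlb (by positivity)
      have h2 : (2 * a ^ 2 * l) * (a + 1 - c) < (1 + c) * (a + 1 - c) :=
        mul_lt_mul_of_pos_right hK h1c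
      nlinarith [h1, h2]
    have ha43 : a < 4 / 3 := by nlinarith [h2a3]
    nlinarith [mul_pos (show (0:ℝ) < a + c - 2 by linarith)
        (show (0:ℝ) < c - (2 * a - 2) by linarith),
      mul_nonneg (show (0:ℝ) ≤ a - 1 by linarith)
        (show (0:ℝ) ≤ 2 * a ^ 2 + 4 * a - 3 by nlinarith)]
  -- shifted sequences
  set Ys : ℕ → ℝ := fun m => x (m + 1) - x m with hYs
  set vs : ℕ → ℝ := fun m => f (Ys m) with hvs
  set us : ℕ → ℝ := fun m => Ys (m + 1) - vs m with hus
  have hxs : ∀ m : ℕ, x (m + 2) = c * x (m + 1) + f (Ys m) := by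
    intro m
    have h := hx (m + 1) (by omega)
    rw [show m + 1 + 1 = m + 2 from rfl, show m + 1 - 1 = m from rfl] at h
    exact h
  have hYe : ∀ k : ℕ, Ys k = x (k + 1) - x k := fun k => by rw [hYs]
  have hve : ∀ k : ℕ, vs k = f (Ys k) := fun k => by rw [hvs]
  have hue : ∀ k : ℕ, us k = Ys (k + 1) - vs k := fun k => by rw [hus]
  have hvnn : ∀ k : ℕ, 0 ≤ vs k := fun k => by rw [hve k]; exact (hfb _).1
  have hyrec2 : ∀ m : ℕ, Ys (m + 2) = c * Ys (m + 1) + f (Ys (m + 1)) - vs m := by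
    intro m
    have h1 := hxs (m + 1)
    rw [show m + 1 + 2 = m + 3 from rfl] at h1
    have h2 := hxs m
    rw [hYe (m + 2), hYe (m + 1), show m + 2 + 1 = m + 3 from rfl,
      show m + 1 + 1 = m + 2 from rfl, hve m] at *
    linarith [h1, h2]
  have hurec : ∀ m : ℕ, us (m + 1) = c * us m + (c - 1) * vs m := by
    intro m
    rw [hue (m + 1), hve (m + 1), show m + 1 + 1 = m + 2 from rfl, hyrec2 m, hue m]
    ring
  have hx_us : ∀ m : ℕ, us m = (c - 1) * x (m + 1) := by
    intro m
    rw [hue m, hYe (m + 1), hve m, show m + 1 + 1 = m + 2 from rfl, hxs m]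
    ring
  by_cases hcase : ∃ m : ℕ, Ys (m + 1) ≤ l * vs m
  · -- Case A : Lyapunov argument
    obtain ⟨M, hM⟩ := hcase
    have hinv : ∀ m, M ≤ m → Ys (m + 1) ≤ l * vs m := by
      intro m hm
      induction m, hm using Nat.le_induction with
      | base => exact hM
      | succ m hm ih =>
          rw [show m + 1 + 1 = m + 2 from rfl, hve (m + 1), hyrec2 m]
          exact sed_step c a l (Ys (m + 1)) (f (Ys (m + 1))) (vs m) hc0 hc1 hl_pos hl_le1
            hacl hacl2 ((hfb _).2) (hvnn m) ih
    -- constants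
    have hall : a ^ 2 * l ^ 2 < 1 := by nlinarith
    set γ₀ : ℝ := l * (1 - c) * (2 - l * (1 + c)) / (1 - a ^ 2 * l ^ 2) with hg0
    set γ₂ : ℝ := c * (1 - c) / a ^ 2 with hg2
    set γ₁ : ℝ := (1 - c ^ 2) / a ^ 2 with hg1
    have hγ01 : γ₀ < γ₁ := by
      rw [hg0, hg1, div_lt_div_iff₀ (by linarith) ha2]
      nlinarith [mul_pos (show (0:ℝ) < 1 - c by linarith)
        (show (0:ℝ) < 1 + c - 2 * a ^ 2 * l by linarith), hl_pos, hl_le1]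
    have hγ21 : γ₂ < γ₁ := by
      rw [hg2, hg1, div_lt_div_iff₀ ha2 ha2]
      nlinarith
    have hγ0nn : 0 ≤ γ₀ := by
      apply div_nonneg _ (by nlinarith)
      have h1 : 0 ≤ 2 - l * (1 + c) := by nlinarith
      have h2 : 0 ≤ l * (1 - c) := mul_nonneg hl_pos.le (by linarith)
      exact mul_nonneg h2 h1
    have hγ2nn : 0 ≤ γ₂ := div_nonneg (mul_nonneg hc0 (by linarith)) ha2.le
    set γ : ℝ := (max γ₀ γ₂ + γ₁) / 2 with hg
    have hγlt1 : γ < γ₁ := by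
      have := max_lt hγ01 hγ21; rw [hg]; linarith
    have hγgt0 : γ₀ < γ := by
      have h1 := le_max_left γ₀ γ₂; rw [hg]; linarith
    have hγgt2 : γ₂ < γ := by
      have h1 := le_max_right γ₀ γ₂; rw [hg]; linarith
    have hγpos : 0 < γ := lt_of_le_of_lt hγ2nn hγgt2
    set A : ℝ := 1 - c ^ 2 - γ * a ^ 2 with hA_def
    set C : ℝ := 2 * c * (1 - c) - 2 * γ * a ^ 2 with hC_def
    set B : ℝ := γ * (1 - a ^ 2) - (1 - c) ^ 2 with hB_def
    set D : ℝ := γ * (1 - a ^ 2 * l ^ 2) - l * (1 - c) * (2 - l * (1 + c)) with hD_def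
    have hA : 0 < A := by
      rw [hg1, lt_div_iff₀ ha2] at hγlt1; rw [hA_def]; linarith
    have hC : C ≤ 0 := by
      rw [hg2, div_lt_iff₀ ha2] at hγgt2; rw [hC_def]; linarith
    have hD : 0 < D := by
      rw [hg0, div_lt_iff₀ (by nlinarith)] at hγgt0; rw [hD_def]; linarith
    have hDrel : D = A * (l - 1) ^ 2 + C * (l - 1) + B := by
      rw [hD_def, hA_def, hB_def, hC_def]; ring
    -- Lyapunov function
    set V : ℕ → ℝ := fun m => (us m) ^ 2 + γ * (vs m) ^ 2 with hV
    have hV0 : ∀ m, 0 ≤ V m := fun m =>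
      add_nonneg (sq_nonneg _) (mul_nonneg hγpos.le (sq_nonneg _))
    have hsteps : ∀ m, M ≤ m →
        D * (vs m) ^ 2 ≤ V m - V (m + 1) ∧
          A * (us m) ^ 2 + B * (vs m) ^ 2 ≤ V m - V (m + 1) := by
      intro m hm
      have hcone : us m ≤ (l - 1) * vs m := by
        have h := hinv m hm
        rw [hue m]
        nlinarith [h]
      have hsq : (vs (m + 1)) ^ 2 ≤ a ^ 2 * (us m + vs m) ^ 2 := by
        have h0 : 0 ≤ vs (m + 1) := hvnn (m + 1)
        have h1 : vs (m + 1) ≤ a * |Ys (m + 1)| := by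
          rw [hve (m + 1)]; exact (hfb _).2
        have h2 : us m + vs m = Ys (m + 1) := by rw [hue m]; ring
        have h3 : (vs (m + 1)) ^ 2 ≤ (a * |Ys (m + 1)|) ^ 2 := by
          nlinarith [mul_self_le_mul_self h0 h1]
        rw [h2]
        calc (vs (m + 1)) ^ 2 ≤ (a * |Ys (m + 1)|) ^ 2 := h3
          _ = a ^ 2 * (Ys (m + 1)) ^ 2 := by rw [mul_pow, sq_abs]
      have hQ : A * (us m) ^ 2 + C * (us m * vs m) + B * (vs m) ^ 2 ≤ V m - V (m + 1) := by
        have hexp : V m - V (m + 1) =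
            (us m) ^ 2 + γ * (vs m) ^ 2 - (c * us m + (c - 1) * vs m) ^ 2
              - γ * (vs (m + 1)) ^ 2 := by
          show (us m) ^ 2 + γ * (vs m) ^ 2 - ((us (m + 1)) ^ 2 + γ * (vs (m + 1)) ^ 2) = _
          rw [hurec m]; ring
        rw [hexp, hA_def, hB_def, hC_def]
        nlinarith [mul_le_mul_of_nonneg_left hsq hγpos.le]
      obtain ⟨hcc1, hcc2⟩ :=
        sed_cone A B C D l (us m) (vs m) hA hC hl_le1 (hvnn m) hcone hDrel
      exact ⟨le_trans hcc1 hQ, le_trans hcc2 hQ⟩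
    have hconv : Tendsto us atTop (nhds 0) :=
      sed_conv V us vs A B D hA hD M hV0 (fun n hn => (hsteps n hn).1)
        (fun n hn => (hsteps n hn).2)
    have hxlim : Tendsto (fun m => x (m + 1)) atTop (nhds 0) := by
      have h1 : Tendsto (fun m => us m * (1 / (c - 1))) atTop (nhds 0) := by
        simpa using hconv.mul_const (1 / (c - 1))
      have he : (fun m => us m * (1 / (c - 1))) = fun m => x (m + 1) := by
        funext m
        rw [hx_us m]
        have : c - 1 ≠ 0 := by intro h; apply absurd hc1; simp; nlinarith [h]
        field_simp
      rwa [he] at h1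
    exact (tendsto_add_atTop_iff_nat 1).mp hxlim
  · -- Case B
    push_neg at hcase
    have hinc : ∀ n : ℕ, 1 ≤ n → x n < x (n + 1) := by
      intro n hn
      obtain ⟨m, rfl⟩ : ∃ m, n = m + 1 := ⟨n - 1, by omega⟩
      have h := hcase m
      have h2 : 0 ≤ l * vs m := mul_nonneg hl_pos.le (hvnn m)
      have h3 : 0 < Ys (m + 1) := lt_of_le_of_lt h2 h
      rw [hYe (m + 1), show m + 1 + 1 = m + 2 from rfl] at h3
      linarith
    have hquad : ∀ n : ℕ, 2 ≤ n → x (n + 1) ≤ (a + c) * x n - a * x (n - 1) := by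
      intro n hn
      obtain ⟨m, rfl⟩ : ∃ m, n = m + 2 := ⟨n - 2, by omega⟩
      rw [show m + 2 - 1 = m + 1 from rfl, show m + 2 + 1 = m + 3 from rfl]
      have h1 := hxs (m + 1)
      rw [show m + 1 + 2 = m + 3 from rfl] at h1
      have hY1pos : 0 < Ys (m + 1) :=
        lt_of_le_of_lt (mul_nonneg hl_pos.le (hvnn m)) (hcase m)
      have hfle : f (Ys (m + 1)) ≤ a * Ys (m + 1) := by
        have h := (hfb (Ys (m + 1))).2
        rwa [abs_of_pos hY1pos] at h
      have hYe1 : Ys (m + 1) = x (m + 2) - x (m + 1) := by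
        rw [hYe (m + 1), show m + 1 + 1 = m + 2 from rfl]
      rw [hYe1] at h1 hfle
      linarith [h1, hfle]
    by_cases hpos : ∃ m : ℕ, 1 ≤ m ∧ 0 < x m
    · obtain ⟨m, hm1, hxm⟩ := hpos
      exact (sed_ratio c a x m hc1 hacle2 hquad
        (fun n hn => hinc n (le_trans hm1 hn)) hm1 hxm).elim
    · push_neg at hpos
      exact sed_bdd c a f hf hc1 hfb x hx hinc hpos
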